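/- Over GF(2) = ℤ/2ℤ, let M₀ be the 2 × 4 matrix with rows (0,1,1,1) and (1,0,1,1), let M₁ be the 2 × 4 matrix with rows (1,0,1,0) and (0,1,0,1), and let M₂ be the 2 × 4 matrix with rows (0,1,0,1) and (1,0,1,0). Then the free distance of the (4,2) convolutional code with generator matrix G(X) = M₀ + M₁·X + M₂·X² over GF(2)[X] equals 6; that is, the minimum of wt(u·G(X)) over all nonzero row vectors u ∈ (GF(2)[X])² is exactly 6. -/

import Mathlib

open Polynomial

abbrev P2 := Polynomial (ZMod 2)

lemma h20 : (2 : P2) = 0 := by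
  have h : (2 : P2) = C 2 := by
    rw [show (2:P2) = 1 + 1 from by ring, show (2:ZMod 2) = 1 + 1 from rfl, map_add, map_one]
  rw [h, show (2 : ZMod 2) = 0 from rfl, map_zero]

lemma one_le_wt {f : P2} (hf : f ≠ 0) : 1 ≤ f.support.card :=
  Finset.card_pos.mpr (nonempty_support_iff.mpr hf)

lemma two_le_wt_mul {b g : P2} (hb : b ≠ 0) (hg : g.natTrailingDegree < g.natDegree) :
    2 ≤ (b * g).support.card := by
  have hg0 : g ≠ 0 := by rintro rfl; simp at hg
  have hbg : b * g ≠ 0 := mul_ne_zero hb hg0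
  have h1 : (b*g).natDegree ∈ (b*g).support := natDegree_mem_support_of_nonzero hbg
  have h2 : (b*g).natTrailingDegree ∈ (b*g).support := by
    rw [mem_support_iff]; exact coeff_natTrailingDegree_ne_zero.mpr hbg
  have hne : (b*g).natTrailingDegree ≠ (b*g).natDegree := by
    rw [natTrailingDegree_mul hb hg0, natDegree_mul hb hg0]
    exact Nat.ne_of_lt (add_lt_add_of_le_of_lt (natTrailingDegree_le_natDegree b) hg)
  exact Finset.one_lt_card.mpr ⟨_, h2, _, h1, hne⟩

lemma tdlt {g : P2} (h0 : g.coeff 0 ≠ 0) (hd : 0 < g.natDegree) :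
    g.natTrailingDegree < g.natDegree := by
  have : g.natTrailingDegree = 0 := natTrailingDegree_eq_zero.mpr (Or.inr h0)
  omega

lemma td1 : (1 + X : P2).natTrailingDegree < (1 + X : P2).natDegree := by
  apply tdlt
  · simp
  · have : (1 + X : P2).natDegree = 1 := by compute_degree!
    omega
lemma td2 : (1 + X^2 + X^3 : P2).natTrailingDegree < (1 + X^2 + X^3 : P2).natDegree := by
  apply tdlt
  · simp
  · have : (1 + X^2 + X^3 : P2).natDegree = 3 := by compute_degree!
    omega
lemma td3 : (1 + X^2 + X^4 : P2).natTrailingDegree < (1 + X^2 + X^4 : P2).natDegree := by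
  apply tdlt
  · simp
  · have : (1 + X^2 + X^4 : P2).natDegree = 4 := by compute_degree!
    omega

lemma hX1 : (1 + X : P2) ≠ 0 := by
  intro h; have := congrArg (fun p => coeff p 1) h; simp [coeff_one] at this

lemma key (a b : P2) (h : ¬(a = 0 ∧ b = 0)) :
    6 ≤ (a*X + b*(1+X^2)).support.card + (a*(1+X^2) + b*X).support.card
      + (a*(1+X) + b*(1+X^2)).support.card + (a*(1+X^2) + b*(1+X)).support.card := by
  by_cases hf2 : a*(1+X) + b*(1+X^2) = 0
  · have hb : b ≠ 0 := by
      rintro rfl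
      rw [zero_mul, add_zero, mul_eq_zero] at hf2
      exact h ⟨hf2.resolve_right hX1, rfl⟩
    have hab : a = b*(1+X) := by
      apply mul_right_cancel₀ hX1
      linear_combination hf2 - b*(1+X+X^2)*h20
    have e0 : a*X + b*(1+X^2) = b*(1+X) := by rw [hab]; linear_combination b*X^2*h20
    have e1 : a*(1+X^2) + b*X = b*(1+X^2+X^3) := by rw [hab]; linear_combination b*X*h20
    have e3 : a*(1+X^2) + b*(1+X) = (b*X^2)*(1+X) := by rw [hab]; linear_combination b*(1+X)*h20
    have w0 : 2 ≤ (a*X + b*(1+X^2)).support.card := by rw [e0]; exact two_le_wt_mul hb td1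
    have w1 : 2 ≤ (a*(1+X^2) + b*X).support.card := by rw [e1]; exact two_le_wt_mul hb td2
    have w3 : 2 ≤ (a*(1+X^2) + b*(1+X)).support.card := by
      rw [e3]; exact two_le_wt_mul (mul_ne_zero hb (pow_ne_zero 2 X_ne_zero)) td1
    omega
  · by_cases hf3 : a*(1+X^2) + b*(1+X) = 0
    · have ha : a ≠ 0 := by
        rintro rfl
        rw [zero_mul, zero_add, mul_eq_zero] at hf3
        exact h ⟨rfl, hf3.resolve_right hX1⟩
      have hba : b = a*(1+X) := by
        apply mul_right_cancel₀ hX1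
        linear_combination hf3 - a*(1+X+X^2)*h20
      have e0 : a*X + b*(1+X^2) = a*(1+X^2+X^3) := by rw [hba]; linear_combination a*X*h20
      have e1 : a*(1+X^2) + b*X = a*(1+X) := by rw [hba]; linear_combination a*X^2*h20
      have e2 : a*(1+X) + b*(1+X^2) = (a*X^2)*(1+X) := by rw [hba]; linear_combination a*(1+X)*h20
      have w0 : 2 ≤ (a*X + b*(1+X^2)).support.card := by rw [e0]; exact two_le_wt_mul ha td2
      have w1 : 2 ≤ (a*(1+X^2) + b*X).support.card := by rw [e1]; exact two_le_wt_mul ha td1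
      have w2 : 2 ≤ (a*(1+X) + b*(1+X^2)).support.card := by
        rw [e2]; exact two_le_wt_mul (mul_ne_zero ha (pow_ne_zero 2 X_ne_zero)) td1
      omega
    · have e2 : a*(1+X) + b*(1+X^2) = (a + b*(1+X))*(1+X) := by
        linear_combination (-b*X)*h20
      have e3 : a*(1+X^2) + b*(1+X) = (b + a*(1+X))*(1+X) := by
        linear_combination (-a*X)*h20
      have h2' : a + b*(1+X) ≠ 0 := fun hh => hf2 (by rw [e2, hh, zero_mul])
      have h3' : b + a*(1+X) ≠ 0 := fun hh => hf3 (by rw [e3, hh, zero_mul])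
      have w2 : 2 ≤ (a*(1+X) + b*(1+X^2)).support.card := by
        rw [e2]; exact two_le_wt_mul h2' td1
      have w3 : 2 ≤ (a*(1+X^2) + b*(1+X)).support.card := by
        rw [e3]; exact two_le_wt_mul h3' td1
      by_cases hf0 : a*X + b*(1+X^2) = 0
      · have hb0 : b.coeff 0 = 0 := by
          have := congrArg (fun p => coeff p 0) hf0
          simpa [mul_coeff_zero] using this
        obtain ⟨c, hc⟩ := X_dvd_iff.mpr hb0
        have hc0 : c ≠ 0 := by
          rintro rfl
          rw [mul_zero] at hc
          subst hc
          rw [zero_mul, add_zero, mul_eq_zero] at hf0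
          exact h ⟨hf0.resolve_right X_ne_zero, rfl⟩
        have ha : a = c*(1+X^2) := by
          apply mul_right_cancel₀ X_ne_zero
          linear_combination hf0 - (1+X^2)*hc - c*X*(1+X^2)*h20
        have e1 : a*(1+X^2) + b*X = c*(1+X^2+X^4) := by
          rw [ha, hc]; linear_combination c*X^2*h20
        have w1 : 2 ≤ (a*(1+X^2) + b*X).support.card := by
          rw [e1]; exact two_le_wt_mul hc0 td3
        omega
      · by_cases hf1 : a*(1+X^2) + b*X = 0
        · have ha0 : a.coeff 0 = 0 := by
            have := congrArg (fun p => coeff p 0) hf1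
            simpa [mul_coeff_zero] using this
          obtain ⟨c, hc⟩ := X_dvd_iff.mpr ha0
          have hc0 : c ≠ 0 := by
            rintro rfl
            rw [mul_zero] at hc
            subst hc
            rw [zero_mul, zero_add, mul_eq_zero] at hf1
            exact h ⟨rfl, hf1.resolve_right X_ne_zero⟩
          have hb : b = c*(1+X^2) := by
            apply mul_right_cancel₀ X_ne_zero
            linear_combination hf1 - (1+X^2)*hc - c*X*(1+X^2)*h20
          have e0 : a*X + b*(1+X^2) = c*(1+X^2+X^4) := by
            rw [hb, hc]; linear_combination c*X^2*h20
          have w0 : 2 ≤ (a*X + b*(1+X^2)).support.card := by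
            rw [e0]; exact two_le_wt_mul hc0 td3
          omega
        · have w0 := one_le_wt hf0
          have w1 := one_le_wt hf1
          omega

lemma sum_eq (u : Fin 2 → P2) :
    ∑ j, (Matrix.vecMul u
        ((!![0,1,1,1; 1,0,1,1] : Matrix (Fin 2) (Fin 4) (ZMod 2)).map C
          + ((X : Polynomial (ZMod 2)) ^ 1) •
            (!![1,0,1,0; 0,1,0,1] : Matrix (Fin 2) (Fin 4) (ZMod 2)).map C
          + ((X : Polynomial (ZMod 2)) ^ 2) •
            (!![0,1,0,1; 1,0,1,0] :
              Matrix (Fin 2) (Fin 4) (ZMod 2)).map C) j).support.card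
    = (u 0*X + u 1*(1+X^2)).support.card + (u 0*(1+X^2) + u 1*X).support.card
      + (u 0*(1+X) + u 1*(1+X^2)).support.card + (u 0*(1+X^2) + u 1*(1+X)).support.card := by
  simp [Fin.sum_univ_four, Matrix.vecMul, dotProduct, Fin.sum_univ_two,
    Matrix.add_apply, Matrix.smul_apply, Matrix.map_apply, pow_one]

lemma card_one_add_X_pow (n : ℕ) (hn : n ≠ 0) : (1 + X^n : P2).support.card = 2 := by
  rw [show (1 + X^n : P2) = C 1 * X^0 + C 1 * X^n by simp]
  exact card_support_binomial (Ne.symm hn) one_ne_zero one_ne_zero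

theorem stmt_12 :
    IsLeast {d : ℕ | ∃ u : Fin 2 → Polynomial (ZMod 2), u ≠ 0 ∧
      d = ∑ j, (Matrix.vecMul u
        ((!![0,1,1,1; 1,0,1,1] : Matrix (Fin 2) (Fin 4) (ZMod 2)).map C
          + ((X : Polynomial (ZMod 2)) ^ 1) •
            (!![1,0,1,0; 0,1,0,1] : Matrix (Fin 2) (Fin 4) (ZMod 2)).map C
          + ((X : Polynomial (ZMod 2)) ^ 2) •
            (!![0,1,0,1; 1,0,1,0] :
              Matrix (Fin 2) (Fin 4) (ZMod 2)).map C) j).support.card}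
      6 := by
  constructor
  · refine ⟨![1, X], ?_, ?_⟩
    · intro hu
      have := congrFun hu 0
      simp at this
    · rw [sum_eq]
      have e0 : ((![1, X] : Fin 2 → P2) 0*X + (![1, X] : Fin 2 → P2) 1*(1+X^2)) = X^3 := by
        show (1 : P2)*X + X*(1+X^2) = X^3
        linear_combination X*h20
      have e1 : ((![1, X] : Fin 2 → P2) 0*(1+X^2) + (![1, X] : Fin 2 → P2) 1*X) = 1 := by
        show (1 : P2)*(1+X^2) + X*X = 1
        linear_combination X^2*h20
      have e2 : ((![1, X] : Fin 2 → P2) 0*(1+X) + (![1, X] : Fin 2 → P2) 1*(1+X^2)) = 1+X^3 := by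
        show (1 : P2)*(1+X) + X*(1+X^2) = 1+X^3
        linear_combination X*h20
      have e3 : ((![1, X] : Fin 2 → P2) 0*(1+X^2) + (![1, X] : Fin 2 → P2) 1*(1+X)) = 1+X := by
        show (1 : P2)*(1+X^2) + X*(1+X) = 1+X
        linear_combination X^2*h20
      rw [e0, e1, e2, e3, card_one_add_X_pow 3 (by norm_num), show (1+X:P2) = 1+X^1 from (pow_one (X:P2)).symm ▸ rfl]
      rw [card_one_add_X_pow 1 (by norm_num), support_X_pow 3,
        show (support (1:P2)).card = 1 by rw [show (1:P2) = C 1 from (map_one C).symm, support_C one_ne_zero]; rfl]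
      rfl
  · rintro d ⟨u, hu, rfl⟩
    have h : ¬(u 0 = 0 ∧ u 1 = 0) := by
      rintro ⟨h1, h2⟩
      apply hu
      funext i
      fin_cases i <;> assumption
    rw [sum_eq]
    exact key (u 0) (u 1) h
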